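/- Let A_h > A_ℓ > 0 and φ > 0, and set c := φ/(2A_h). Then the ratio (p·φ + (1−p)·√(c·φ·A_ℓ/2)) / √(c·φ·(p·A_h + (1−p)·A_ℓ)/2) tends to 2 as p tends to 1 from below; that is, at this cost level the optimal signaling policy's payoff approaches twice the no-signaling benchmark payoff. -/

import Mathlib

open Filter Topology

/-- At cost c = φ/(2A_h), the ratio of the optimal signaling payoff to the
no-signaling benchmark tends to 2 as p → 1⁻. -/
theorem stmt_17 (Ah Al φ : ℝ) (hAl : 0 < Al) (hAh : Al < Ah) (hφ : 0 < φ)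
    (c : ℝ) (hc : c = φ / (2 * Ah)) :
    Tendsto
      (fun p : ℝ =>
        (p * φ + (1 - p) * Real.sqrt (c * φ * Al / 2))
          / Real.sqrt (c * φ * (p * Ah + (1 - p) * Al) / 2))
      (nhdsWithin 1 (Set.Iio 1)) (nhds 2) := by
  have hAh0 : (0:ℝ) < Ah := hAl.trans hAh
  have harg : c * φ * ((1:ℝ) * Ah + (1 - 1) * Al) / 2 = (φ / 2) ^ 2 := by
    field_simp [hc]
    rw [hc]; field_simp; ring
  have hden : Real.sqrt (c * φ * ((1:ℝ) * Ah + (1 - 1) * Al) / 2) = φ / 2 := by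
    rw [harg, Real.sqrt_sq (by positivity)]
  have hval : ((1:ℝ) * φ + (1 - 1) * Real.sqrt (c * φ * Al / 2))
      / Real.sqrt (c * φ * ((1:ℝ) * Ah + (1 - 1) * Al) / 2) = 2 := by
    rw [hden]
    field_simp
    ring
  have hcont : ContinuousAt
      (fun p : ℝ =>
        (p * φ + (1 - p) * Real.sqrt (c * φ * Al / 2))
          / Real.sqrt (c * φ * (p * Ah + (1 - p) * Al) / 2)) 1 := by
    apply ContinuousAt.div
    · fun_prop
    · exact (Real.continuous_sqrt.comp (by fun_prop)).continuousAt
    · rw [hden]; positivity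
  have h := hcont.tendsto.mono_left (nhdsWithin_le_nhds (s := Set.Iio 1))
  rwa [hval] at h
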